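/- arXiv:0905.0380 — 2 statements merged into one kernel-verified Lean document; each statement's English description precedes it below -/
import Mathlib

section
/- Let C₂ be a cyclic group of order 2, let A₄ be the alternating group on four letters, let V₄ be its unique subgroup of order 4, and let C be any subgroup of A₄ of order 2. Then the subgroups C₂ × V₄ and C₂ × C of the group C₂ × A₄ are NOT jump equivalent, even though their images V₄ and C modulo the normal subgroup N = C₂ × {1} are jump equivalent in A₄ ≅ (C₂ × A₄)/N. Hence jump equivalence of H/N and H'/N in G/N does not imply jump equivalence of H and H' in G. -/
/-- A subset `S` of a group is conjugation-stable if `gSg⁻¹ = S` for all `g`. -/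
def ConjStable {G : Type*} [Group G] (S : Set G) : Prop :=
  ∀ g : G, (fun x => g * x * g⁻¹) '' S = S

/-- Subgroups `H, H'` of `G` are jump equivalent if for all conjugation-stable
subsets `S, T` of `G`, `⟨H ∩ S⟩ = ⟨H ∩ T⟩ ↔ ⟨H' ∩ S⟩ = ⟨H' ∩ T⟩`. -/
def JumpEquivalent {G : Type*} [Group G] (H H' : Subgroup G) : Prop :=
  ∀ S T : Set G, ConjStable S → ConjStable T →
    (Subgroup.closure ((H : Set G) ∩ S) = Subgroup.closure ((H : Set G) ∩ T) ↔
     Subgroup.closure ((H' : Set G) ∩ S) = Subgroup.closure ((H' : Set G) ∩ T))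

/-- Subgroups `H, H'` of `G` are order equivalent if `#⟨H ∩ S⟩ = #⟨H' ∩ S⟩` for every
conjugation-stable subset `S` of `G`. -/
def OrderEquivalent {G : Type*} [Group G] (H H' : Subgroup G) : Prop :=
  ∀ S : Set G, ConjStable S →
    Nat.card (Subgroup.closure ((H : Set G) ∩ S)) =
      Nat.card (Subgroup.closure ((H' : Set G) ∩ S))

/-- Subgroups `H, H'` of `G` are Gassmann-Sunada equivalent if `#(H ∩ S) = #(H' ∩ S)` for
every conjugation-stable subset `S` of `G`. -/
def GassmannEquivalent {G : Type*} [Group G] (H H' : Subgroup G) : Prop :=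
  ∀ S : Set G, ConjStable S →
    Set.ncard ((H : Set G) ∩ S) = Set.ncard ((H' : Set G) ∩ S)

/-- Subgroups `H, H'` of `G` are Kronecker equivalent if for every conjugation-stable subset
`S` of `G`, `H ∩ S = ∅ ↔ H' ∩ S = ∅`. -/
def KroneckerEquivalent {G : Type*} [Group G] (H H' : Subgroup G) : Prop :=
  ∀ S : Set G, ConjStable S → ((H : Set G) ∩ S = ∅ ↔ (H' : Set G) ∩ S = ∅)

namespace JumpAux

abbrev A4 := ↥(alternatingGroup (Fin 4))
abbrev M2 := Multiplicative (ZMod 2)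

def d1 : A4 := ⟨Equiv.swap 0 1 * Equiv.swap 2 3, by rw [Equiv.Perm.mem_alternatingGroup]; decide⟩
def d2 : A4 := ⟨Equiv.swap 0 2 * Equiv.swap 1 3, by rw [Equiv.Perm.mem_alternatingGroup]; decide⟩
def d3 : A4 := ⟨Equiv.swap 0 3 * Equiv.swap 1 2, by rw [Equiv.Perm.mem_alternatingGroup]; decide⟩
def g0 : M2 := Multiplicative.ofAdd 1
def Dset : Set A4 := {x | x ^ 2 = 1 ∧ x ≠ 1}
def S0 : Set (M2 × A4) := {p | p.1 = g0 ∧ p.2 ∈ Dset}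
def T0 : Set (M2 × A4) := {p | p.2 ∈ Dset}

lemma conjStable_mem {G : Type*} [Group G] {S : Set G} (hS : ConjStable S)
    {x : G} (hx : x ∈ S) (g : G) : g * x * g⁻¹ ∈ S :=
  hS g ▸ Set.mem_image_of_mem _ hx

lemma zpowers_cases {Γ : Type*} [Group Γ] {a : Γ} (ha : a ^ 2 = 1) {x : Γ}
    (hx : x ∈ Subgroup.zpowers a) : x = 1 ∨ x = a := by
  obtain ⟨k, rfl⟩ := hx
  show a ^ k = 1 ∨ a ^ k = a
  rcases Int.even_or_odd k with ⟨m, rfl⟩ | ⟨m, rfl⟩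
  · left; rw [← two_mul, zpow_mul]; norm_cast; rw [ha, one_zpow]
  · right; rw [zpow_add, zpow_mul]; norm_cast; rw [ha, one_zpow, one_mul, pow_one]

lemma pow_card_subgroup {Γ : Type*} [Group Γ] {H : Subgroup Γ} {v : Γ} (hv : v ∈ H)
    {n : ℕ} (h : Nat.card H = n) : v ^ n = 1 := by
  have := pow_card_eq_one' (x := (⟨v, hv⟩ : H))
  rw [h] at this
  simpa using congrArg Subtype.val this

lemma sq_cases : ∀ x : A4, x ^ 2 = 1 → x = 1 ∨ x = d1 ∨ x = d2 ∨ x = d3 := by decide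
lemma pow4_sq : ∀ x : A4, x ^ 4 = 1 → x ^ 2 = 1 := by decide

lemma conj_exists : ∀ x y : A4, x ^ 2 = 1 → x ≠ 1 → y ^ 2 = 1 → y ≠ 1 →
    ∃ g : A4, g * x * g⁻¹ = y := by decide

lemma conjSq {Γ : Type*} [Group Γ] (g x : Γ) : (g * x * g⁻¹) ^ 2 = g * x ^ 2 * g⁻¹ := by
  rw [← MulAut.conj_apply, ← map_pow]; rfl

lemma invol_mem_iff {S : Set A4} (hS : ConjStable S) {x y : A4}
    (hx2 : x ^ 2 = 1) (hx1 : x ≠ 1) (hy2 : y ^ 2 = 1) (hy1 : y ≠ 1) :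
    x ∈ S ↔ y ∈ S := by
  constructor
  · intro h
    obtain ⟨g, hg⟩ := conj_exists x y hx2 hx1 hy2 hy1
    exact hg ▸ conjStable_mem hS h g
  · intro h
    obtain ⟨g, hg⟩ := conj_exists y x hy2 hy1 hx2 hx1
    exact hg ▸ conjStable_mem hS h g

lemma d1_sq : d1 ^ 2 = 1 := by decide
lemma d1_ne : d1 ≠ 1 := by decide
lemma d1_D : d1 ∈ Dset := ⟨by decide, by decide⟩
lemma d2_D : d2 ∈ Dset := ⟨by decide, by decide⟩
lemma d3_D : d3 ∈ Dset := ⟨by decide, by decide⟩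

open Classical in
lemma closure_inter (H : Subgroup A4)
    (hH : ∀ x ∈ H, x = 1 ∨ (x ^ 2 = 1 ∧ x ≠ 1))
    {S : Set A4} (hS : ConjStable S) :
    Subgroup.closure ((H : Set A4) ∩ S) = if d1 ∈ S then H else ⊥ := by
  split_ifs with hd
  · apply le_antisymm
    · exact Subgroup.closure_le _ |>.mpr Set.inter_subset_left
    · intro x hx
      rcases hH x hx with rfl | ⟨h2, h1⟩
      · exact Subgroup.one_mem _
      · exact Subgroup.subset_closure ⟨hx, (invol_mem_iff hS h2 h1 d1_sq d1_ne).mpr hd⟩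
  · apply le_bot_iff.mp
    apply Subgroup.closure_le _ |>.mpr
    rintro x ⟨hxH, hxS⟩
    rcases hH x hxH with rfl | ⟨h2, h1⟩
    · exact Set.mem_singleton _
    · exact absurd ((invol_mem_iff hS h2 h1 d1_sq d1_ne).mp hxS) hd

lemma habel : ∀ a x : M2, a * x * a⁻¹ = x := by decide
lemma a_cases : ∀ a : M2, a = 1 ∨ a = g0 := by decide

lemma hDconj : ∀ (g x : A4), x ∈ Dset → g * x * g⁻¹ ∈ Dset := by
  rintro g x ⟨h2, h1⟩
  refine ⟨by rw [conjSq, h2, mul_one, mul_inv_cancel], ?_⟩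
  rw [Ne, conj_eq_one_iff]
  exact h1

lemma hS0 : ConjStable S0 := by
  intro g
  ext p
  constructor
  · rintro ⟨q, ⟨hq1, hq2⟩, rfl⟩
    exact ⟨by simpa [Prod.fst_mul, habel] using hq1, hDconj g.2 q.2 hq2⟩
  · rintro ⟨hp1, hp2⟩
    refine ⟨g⁻¹ * p * g, ⟨?_, ?_⟩, by group⟩
    · simpa [Prod.fst_mul, habel g.1⁻¹ p.1] using hp1
    · simpa using hDconj g.2⁻¹ p.2 hp2

lemma hT0 : ConjStable T0 := by
  intro g
  ext p
  constructor
  · rintro ⟨q, hq, rfl⟩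
    exact hDconj g.2 q.2 hq
  · intro hp
    exact ⟨g⁻¹ * p * g, by show (g⁻¹ * p * g).2 ∈ Dset; simpa using hDconj g.2⁻¹ p.2 hp, by group⟩

lemma closure_PV_S0 (V : Subgroup A4)
    (hVmem : ∀ v ∈ V, v = 1 ∨ v = d1 ∨ v = d2 ∨ v = d3)
    (h1 : d1 ∈ V) (h2 : d2 ∈ V) (h3 : d3 ∈ V) :
    Subgroup.closure ((((⊤ : Subgroup M2).prod V : Subgroup (M2 × A4)) : Set (M2 × A4)) ∩ S0)
      = (⊤ : Subgroup M2).prod V := by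
  apply le_antisymm
  · exact Subgroup.closure_le _ |>.mpr Set.inter_subset_left
  · have m1 : ((g0, d1) : M2 × A4) ∈ (((⊤ : Subgroup M2).prod V : Subgroup (M2 × A4)) : Set (M2 × A4)) ∩ S0 :=
      ⟨Subgroup.mem_prod.mpr ⟨Subgroup.mem_top _, h1⟩, rfl, d1_D⟩
    have m2 : ((g0, d2) : M2 × A4) ∈ (((⊤ : Subgroup M2).prod V : Subgroup (M2 × A4)) : Set (M2 × A4)) ∩ S0 :=
      ⟨Subgroup.mem_prod.mpr ⟨Subgroup.mem_top _, h2⟩, rfl, d2_D⟩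
    have m3 : ((g0, d3) : M2 × A4) ∈ (((⊤ : Subgroup M2).prod V : Subgroup (M2 × A4)) : Set (M2 × A4)) ∩ S0 :=
      ⟨Subgroup.mem_prod.mpr ⟨Subgroup.mem_top _, h3⟩, rfl, d3_D⟩
    have c1 := Subgroup.subset_closure m1
    have c2 := Subgroup.subset_closure m2
    have c3 := Subgroup.subset_closure m3
    rintro ⟨a, v⟩ hp
    have hv : v ∈ V := (Subgroup.mem_prod.mp hp).2
    rcases a_cases a with rfl | rfl <;> rcases hVmem v hv with rfl | rfl | rfl | rfl
    · exact Subgroup.one_mem _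
    · rw [show ((1 : M2), d1) = (g0, d2) * (g0, d3) by decide]; exact mul_mem c2 c3
    · rw [show ((1 : M2), d2) = (g0, d1) * (g0, d3) by decide]; exact mul_mem c1 c3
    · rw [show ((1 : M2), d3) = (g0, d1) * (g0, d2) by decide]; exact mul_mem c1 c2
    · rw [show ((g0, (1 : A4))) = (g0, d1) * (g0, d2) * (g0, d3) by decide]
      exact mul_mem (mul_mem c1 c2) c3
    · exact c1
    · exact c2
    · exact c3

lemma closure_PV_T0 (V : Subgroup A4)
    (hVmem : ∀ v ∈ V, v = 1 ∨ v = d1 ∨ v = d2 ∨ v = d3)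
    (h1 : d1 ∈ V) (h2 : d2 ∈ V) (h3 : d3 ∈ V) :
    Subgroup.closure ((((⊤ : Subgroup M2).prod V : Subgroup (M2 × A4)) : Set (M2 × A4)) ∩ T0)
      = (⊤ : Subgroup M2).prod V := by
  apply le_antisymm
  · exact Subgroup.closure_le _ |>.mpr Set.inter_subset_left
  · have m1 : ((g0, d1) : M2 × A4) ∈ (((⊤ : Subgroup M2).prod V : Subgroup (M2 × A4)) : Set (M2 × A4)) ∩ T0 :=
      ⟨Subgroup.mem_prod.mpr ⟨Subgroup.mem_top _, h1⟩, d1_D⟩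
    have f1 : (((1 : M2), d1) : M2 × A4) ∈ (((⊤ : Subgroup M2).prod V : Subgroup (M2 × A4)) : Set (M2 × A4)) ∩ T0 :=
      ⟨Subgroup.mem_prod.mpr ⟨Subgroup.mem_top _, h1⟩, d1_D⟩
    have f2 : (((1 : M2), d2) : M2 × A4) ∈ (((⊤ : Subgroup M2).prod V : Subgroup (M2 × A4)) : Set (M2 × A4)) ∩ T0 :=
      ⟨Subgroup.mem_prod.mpr ⟨Subgroup.mem_top _, h2⟩, d2_D⟩
    have f3 : (((1 : M2), d3) : M2 × A4) ∈ (((⊤ : Subgroup M2).prod V : Subgroup (M2 × A4)) : Set (M2 × A4)) ∩ T0 :=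
      ⟨Subgroup.mem_prod.mpr ⟨Subgroup.mem_top _, h3⟩, d3_D⟩
    have m2 : ((g0, d2) : M2 × A4) ∈ (((⊤ : Subgroup M2).prod V : Subgroup (M2 × A4)) : Set (M2 × A4)) ∩ T0 :=
      ⟨Subgroup.mem_prod.mpr ⟨Subgroup.mem_top _, h2⟩, d2_D⟩
    have m3 : ((g0, d3) : M2 × A4) ∈ (((⊤ : Subgroup M2).prod V : Subgroup (M2 × A4)) : Set (M2 × A4)) ∩ T0 :=
      ⟨Subgroup.mem_prod.mpr ⟨Subgroup.mem_top _, h3⟩, d3_D⟩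
    have c1 := Subgroup.subset_closure m1
    have e1 := Subgroup.subset_closure f1
    have e2 := Subgroup.subset_closure f2
    have e3 := Subgroup.subset_closure f3
    have c2 := Subgroup.subset_closure m2
    have c3 := Subgroup.subset_closure m3
    rintro ⟨a, v⟩ hp
    have hv : v ∈ V := (Subgroup.mem_prod.mp hp).2
    rcases a_cases a with rfl | rfl <;> rcases hVmem v hv with rfl | rfl | rfl | rfl
    · exact Subgroup.one_mem _
    · exact e1
    · exact e2
    · exact e3
    · rw [show ((g0, (1 : A4))) = (g0, d1) * ((1 : M2), d1) by decide]
      exact mul_mem c1 e1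
    · exact c1
    · exact c2
    · exact c3

lemma closure_PC_S0_le (C : Subgroup A4) (d : A4)
    (hmem : ∀ x ∈ C, x = 1 ∨ x = d) :
    Subgroup.closure ((((⊤ : Subgroup M2).prod C : Subgroup (M2 × A4)) : Set (M2 × A4)) ∩ S0)
      ≤ Subgroup.zpowers ((g0, d) : M2 × A4) := by
  apply Subgroup.closure_le _ |>.mpr
  rintro ⟨a, x⟩ ⟨hp, ha, hx⟩
  have hxC : x ∈ C := (Subgroup.mem_prod.mp hp).2
  rcases hmem x hxC with rfl | rfl
  · exact absurd rfl hx.2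
  · cases ha
    exact Subgroup.mem_zpowers _

end JumpAux


open JumpAux in
/-- with `V₄` the (unique) subgroup of order 4 of `A₄` and `C` any subgroup of
order 2, the subgroups `C₂ × V₄` and `C₂ × C` of `C₂ × A₄` are NOT jump equivalent, even
though `V₄` and `C` (their images modulo `N = C₂ × {1}`) are jump equivalent in
`A₄ ≅ (C₂ × A₄)/N`. -/
theorem not_jumpEquivalent_prod_of_jumpEquivalent_quotient
    (V C : Subgroup ↥(alternatingGroup (Fin 4)))
    (hV : Nat.card V = 4) (hC : Nat.card C = 2) :
    ¬ JumpEquivalent ((⊤ : Subgroup (Multiplicative (ZMod 2))).prod V)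
        ((⊤ : Subgroup (Multiplicative (ZMod 2))).prod C) ∧
      JumpEquivalent V C := by
  have hV4 : ∀ v ∈ V, v ^ 2 = 1 := fun v hv => pow4_sq v (pow_card_subgroup hv hV)
  have hVmem : ∀ v ∈ V, v = 1 ∨ v = d1 ∨ v = d2 ∨ v = d3 :=
    fun v hv => sq_cases v (hV4 v hv)
  have hVE : (V : Set A4) = {x : A4 | x ^ 2 = 1} := by
    have h1 : {x : A4 | x ^ 2 = 1} = ({1, d1, d2, d3} : Set A4) := by
      ext x
      constructor
      · exact fun h => sq_cases x h
      · revert x; decide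
    have hsub : (V : Set A4) ⊆ {x : A4 | x ^ 2 = 1} := fun v hv => hV4 v hv
    have h2 : (V : Set A4).ncard = 4 := by
      rw [← Nat.card_coe_set_eq]
      simpa using hV
    have hle : ({x : A4 | x ^ 2 = 1}).ncard ≤ (V : Set A4).ncard := by
      rw [h1, h2]
      calc ({1, d1, d2, d3} : Set A4).ncard
          ≤ ({d1, d2, d3} : Set A4).ncard + 1 := Set.ncard_insert_le _ _
        _ ≤ (({d2, d3} : Set A4).ncard + 1) + 1 :=
            Nat.add_le_add_right (Set.ncard_insert_le _ _) 1
        _ ≤ ((({d3} : Set A4).ncard + 1) + 1) + 1 :=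
            Nat.add_le_add_right (Nat.add_le_add_right (Set.ncard_insert_le _ _) 1) 1
        _ ≤ 4 := by simp [Set.ncard_singleton]
    exact Set.eq_of_subset_of_ncard_le hsub hle (Set.toFinite _)
  have hd1V : d1 ∈ V := by
    have : d1 ∈ (V : Set A4) := by rw [hVE]; exact d1_sq
    exact this
  have hd2V : d2 ∈ V := by
    have : d2 ∈ (V : Set A4) := by rw [hVE]; exact d2_D.1
    exact this
  have hd3V : d3 ∈ V := by
    have : d3 ∈ (V : Set A4) := by rw [hVE]; exact d3_D.1
    exact this
  obtain ⟨d, hdC, hd1⟩ : ∃ x ∈ C, x ≠ 1 := by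
    rcases C.bot_or_exists_ne_one with rfl | h2
    · simp at hC
    · exact h2
  have hd2 : d ^ 2 = 1 := pow_card_subgroup hdC hC
  have hCd : (C : Set A4) = {1, d} := by
    symm
    apply Set.eq_of_subset_of_ncard_le
    · rintro x (rfl | rfl)
      · exact C.one_mem
      · exact hdC
    · have h2 : (C : Set A4).ncard = 2 := by
        rw [← Nat.card_coe_set_eq]
        simpa using hC
      rw [h2, Set.ncard_pair (Ne.symm hd1)]
    · exact Set.toFinite _
  have hCcases : ∀ x ∈ C, x = 1 ∨ x = d := by
    intro x hx
    have : x ∈ ({1, d} : Set A4) := hCd ▸ hx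
    exact this
  constructor
  · -- not jump equivalent upstairs
    intro hJ
    have hiff := hJ S0 T0 hS0 hT0
    have hVS := closure_PV_S0 V hVmem hd1V hd2V hd3V
    have hVT := closure_PV_T0 V hVmem hd1V hd2V hd3V
    have hCeq := hiff.mp (hVS.trans hVT.symm)
    have hmem : (((1 : M2), d) : M2 × A4) ∈
        Subgroup.closure ((((⊤ : Subgroup M2).prod C : Subgroup (M2 × A4)) : Set (M2 × A4)) ∩ T0) :=
      Subgroup.subset_closure ⟨Subgroup.mem_prod.mpr ⟨Subgroup.mem_top _, hdC⟩, hd2, hd1⟩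
    rw [← hCeq] at hmem
    have hz : (((1 : M2), d) : M2 × A4) ∈ Subgroup.zpowers ((g0, d) : M2 × A4) :=
      closure_PC_S0_le C d hCcases hmem
    have hsq : ((g0, d) : M2 × A4) ^ 2 = 1 := by
      rw [Prod.pow_mk, Prod.mk_eq_one]
      exact ⟨by decide, hd2⟩
    rcases zpowers_cases hsq hz with h | h
    · exact hd1 (congrArg Prod.snd h)
    · have hfst : (1 : M2) = g0 := congrArg Prod.fst h
      exact absurd hfst (by decide)
  · -- jump equivalence downstairs
    have hVcases : ∀ x ∈ V, x = 1 ∨ (x ^ 2 = 1 ∧ x ≠ 1) := by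
      intro x hx
      by_cases h : x = 1
      · exact Or.inl h
      · exact Or.inr ⟨hV4 x hx, h⟩
    have hCcases' : ∀ x ∈ C, x = 1 ∨ (x ^ 2 = 1 ∧ x ≠ 1) := by
      intro x hx
      rcases hCcases x hx with rfl | rfl
      · exact Or.inl rfl
      · exact Or.inr ⟨hd2, hd1⟩
    intro S T hS hT
    rw [closure_inter V hVcases hS, closure_inter V hVcases hT,
        closure_inter C hCcases' hS, closure_inter C hCcases' hT]
    have hVbot : V ≠ ⊥ := by
      intro h
      rw [h] at hV
      simp at hV
    have hCbot : C ≠ ⊥ := by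
      intro h
      rw [h] at hC
      simp at hC
    split_ifs with h1 h2 h2
    · simp
    · exact iff_of_false hVbot hCbot
    · exact iff_of_false (fun h => hVbot h.symm) (fun h => hCbot h.symm)
    · simp
end

section
/- Let p be an odd prime and let H and H' be finite groups of the same order n in which every element x satisfies x^p = 1. Then the images of H and H' under regular embeddings into the symmetric group Perm(Fin n) are order equivalent (and hence jump equivalent) subgroups of Perm(Fin n). -/
/-- The regular embedding of a group `K` with a bijection `e : K ≃ Fin n` into the symmetric
group `Perm (Fin n)`: the action of `K` on itself by left multiplication, transported along
`e`. -/
def regularEmbedding {K : Type*} [Group K] {n : ℕ} (e : K ≃ Fin n) :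
    K →* Equiv.Perm (Fin n) where
  toFun k := (e.symm.trans (Equiv.mulLeft k)).trans e
  map_one' := by
    ext x
    simp
  map_mul' k k' := by
    ext x
    simp [mul_assoc]

section Aux
variable {p n : ℕ} {K : Type*} [Group K]

lemma regEmb_apply (e : K ≃ Fin n) (k : K) (x : Fin n) :
    regularEmbedding e k x = e (k * e.symm x) := rfl

lemma regEmb_injective (e : K ≃ Fin n) : Function.Injective (regularEmbedding e) := by
  intro k k' h
  have := congrArg (fun σ : Equiv.Perm (Fin n) => σ (e 1)) h
  simpa [regEmb_apply] using this

lemma regEmb_cycleType (hp : p.Prime) (e : K ≃ Fin n) (hK : ∀ x : K, x ^ p = 1)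
    {k : K} (hk : k ≠ 1) :
    (regularEmbedding e k).cycleType = Multiset.replicate (n / p) p := by
  haveI : Fact p.Prime := ⟨hp⟩
  set σ := regularEmbedding e k with hσ
  have hsupp : σ.support = Finset.univ := by
    ext x
    simp only [Equiv.Perm.mem_support, Finset.mem_univ, iff_true]
    intro hx
    apply hk
    rw [hσ, regEmb_apply] at hx
    have : k * e.symm x = e.symm x := by
      have := congrArg e.symm hx
      simpa using this
    simpa using this
  have hne : σ ≠ 1 := by
    intro h
    exact hk (regEmb_injective e (by simpa [map_one] using h))
  have hord : orderOf σ = p := by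
    refine orderOf_eq_prime ?_ hne
    rw [hσ, ← map_pow, hK k, map_one]
  have hall : ∀ a ∈ σ.cycleType, a = p := by
    intro a ha
    have h2 : 2 ≤ a := Equiv.Perm.two_le_of_mem_cycleType ha
    have hdvd : a ∣ p := by
      rw [← hord, ← Equiv.Perm.lcm_cycleType]
      exact Multiset.dvd_lcm ha
    rcases (Nat.Prime.eq_one_or_self_of_dvd hp a hdvd) with h | h
    · omega
    · exact h
  have hrep : σ.cycleType = Multiset.replicate (Multiset.card σ.cycleType) p :=
    (Multiset.eq_replicate_card).2 hall
  have hsum : σ.cycleType.sum = n := by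
    rw [Equiv.Perm.sum_cycleType, hsupp, Finset.card_univ, Fintype.card_fin]
  rw [hrep] at hsum ⊢
  rw [Multiset.sum_replicate, smul_eq_mul] at hsum
  congr 1
  exact (Nat.div_eq_of_eq_mul_left hp.pos hsum.symm).symm

end Aux

section Aux2
variable {p n : ℕ} {H H' : Type*} [Group H] [Group H']

lemma cond_transfer (hp : p.Prime) (e : H ≃ Fin n) (e' : H' ≃ Fin n)
    (hH : ∀ x : H, x ^ p = 1) (hH' : ∀ x : H', x ^ p = 1)
    {S : Set (Equiv.Perm (Fin n))} (hS : ∀ g, (fun x => g * x * g⁻¹) '' S = S)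
    (h : ∃ σ ∈ ((regularEmbedding e).range : Set (Equiv.Perm (Fin n))) ∩ S, σ ≠ 1) :
    ∃ σ ∈ ((regularEmbedding e').range : Set (Equiv.Perm (Fin n))) ∩ S, σ ≠ 1 := by
  obtain ⟨σ, ⟨⟨k, rfl⟩, hkS⟩, hne⟩ := h
  have hk : k ≠ 1 := by rintro rfl; simp at hne
  haveI : Finite H := Finite.of_equiv _ e.symm
  haveI : Finite H' := Finite.of_equiv _ e'.symm
  haveI : Nontrivial H := ⟨k, 1, hk⟩
  have hn : 1 < n := by
    have := Finite.one_lt_card_iff_nontrivial.2 ‹Nontrivial H›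
    rwa [Nat.card_eq_of_equiv_fin e] at this
  haveI : Nontrivial H' := by
    rw [← Finite.one_lt_card_iff_nontrivial, Nat.card_eq_of_equiv_fin e']
    exact hn
  obtain ⟨k', hk'⟩ := exists_ne (1 : H')
  have hconj : IsConj (regularEmbedding e k) (regularEmbedding e' k') := by
    rw [Equiv.Perm.isConj_iff_cycleType_eq, regEmb_cycleType hp e hH hk,
      regEmb_cycleType hp e' hH' hk']
  obtain ⟨c, hc⟩ := isConj_iff.1 hconj
  refine ⟨regularEmbedding e' k', ⟨⟨k', rfl⟩, ?_⟩, ?_⟩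
  · rw [← hS c]; exact ⟨regularEmbedding e k, hkS, hc⟩
  · intro h1
    exact hk' (regEmb_injective e' (by simpa [map_one] using h1))

lemma closure_inter_eq (hp : p.Prime) (e : H ≃ Fin n) (hH : ∀ x : H, x ^ p = 1)
    {S : Set (Equiv.Perm (Fin n))} (hS : ∀ g, (fun x => g * x * g⁻¹) '' S = S)
    (h : ∃ σ ∈ ((regularEmbedding e).range : Set (Equiv.Perm (Fin n))) ∩ S, σ ≠ 1) :
    Subgroup.closure (((regularEmbedding e).range : Set (Equiv.Perm (Fin n))) ∩ S)
      = (regularEmbedding e).range := by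
  obtain ⟨σ, ⟨⟨k, rfl⟩, hkS⟩, hne⟩ := h
  have hk : k ≠ 1 := by rintro rfl; simp at hne
  apply le_antisymm
  · exact Subgroup.closure_le _ |>.2 Set.inter_subset_left
  · rintro g ⟨m, rfl⟩
    by_cases hm : m = 1
    · subst hm; simp only [map_one]; exact Subgroup.one_mem _
    · apply Subgroup.subset_closure
      refine ⟨⟨m, rfl⟩, ?_⟩
      have hconj : IsConj (regularEmbedding e k) (regularEmbedding e m) := by
        rw [Equiv.Perm.isConj_iff_cycleType_eq, regEmb_cycleType hp e hH hk,
          regEmb_cycleType hp e hH hm]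
      obtain ⟨c, hc⟩ := isConj_iff.1 hconj
      rw [← hS c]; exact ⟨regularEmbedding e k, hkS, hc⟩

lemma closure_inter_bot (e : H ≃ Fin n) {S : Set (Equiv.Perm (Fin n))}
    (h : ¬ ∃ σ ∈ ((regularEmbedding e).range : Set (Equiv.Perm (Fin n))) ∩ S, σ ≠ 1) :
    Subgroup.closure (((regularEmbedding e).range : Set (Equiv.Perm (Fin n))) ∩ S) = ⊥ := by
  push_neg at h
  rw [eq_bot_iff]
  apply Subgroup.closure_le _ |>.2
  intro x hx
  simpa using h x hx

lemma range_ne_bot (e : H ≃ Fin n) {S : Set (Equiv.Perm (Fin n))}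
    (h : ∃ σ ∈ ((regularEmbedding e).range : Set (Equiv.Perm (Fin n))) ∩ S, σ ≠ 1) :
    (regularEmbedding e).range ≠ ⊥ := by
  obtain ⟨σ, ⟨hσr, _⟩, hσ1⟩ := h
  intro hb
  rw [hb] at hσr
  exact hσ1 hσr

lemma card_range (e : H ≃ Fin n) :
    Nat.card ((regularEmbedding e).range) = n := by
  rw [Nat.card_congr (MonoidHom.ofInjective (regEmb_injective e)).toEquiv.symm,
    Nat.card_eq_of_equiv_fin e]

end Aux2

/-- if `p` is an odd prime and `H`, `H'` are finite groups of the same order `n`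
with `x ^ p = 1` for every element `x`, then the images of `H` and `H'` under regular
embeddings into `Perm (Fin n)` are order equivalent, and hence jump equivalent. -/
theorem orderEquivalent_range_regularEmbedding_of_exponent_p {p n : ℕ}
    (hp : Nat.Prime p) (hodd : Odd p)
    {H H' : Type*} [Group H] [Group H'] (e : H ≃ Fin n) (e' : H' ≃ Fin n)
    (hH : ∀ x : H, x ^ p = 1) (hH' : ∀ x : H', x ^ p = 1) :
    OrderEquivalent (regularEmbedding e).range (regularEmbedding e').range ∧
      JumpEquivalent (regularEmbedding e).range (regularEmbedding e').range := by
  constructor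
  · intro S hS
    by_cases h : ∃ σ ∈ ((regularEmbedding e).range : Set (Equiv.Perm (Fin n))) ∩ S, σ ≠ 1
    · rw [closure_inter_eq hp e hH hS h,
        closure_inter_eq hp e' hH' hS (cond_transfer hp e e' hH hH' hS h),
        card_range e, card_range e']
    · have h' : ¬ ∃ σ ∈ ((regularEmbedding e').range : Set (Equiv.Perm (Fin n))) ∩ S, σ ≠ 1 :=
        fun h' => h (cond_transfer hp e' e hH' hH hS h')
      rw [closure_inter_bot e h, closure_inter_bot e' h']
  · intro S T hS hT
    by_cases hs : ∃ σ ∈ ((regularEmbedding e).range : Set (Equiv.Perm (Fin n))) ∩ S, σ ≠ 1 <;>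
      by_cases ht : ∃ σ ∈ ((regularEmbedding e).range : Set (Equiv.Perm (Fin n))) ∩ T, σ ≠ 1
    · have hs' := cond_transfer hp e e' hH hH' hS hs
      have ht' := cond_transfer hp e e' hH hH' hT ht
      rw [closure_inter_eq hp e hH hS hs, closure_inter_eq hp e hH hT ht,
        closure_inter_eq hp e' hH' hS hs', closure_inter_eq hp e' hH' hT ht']
      simp
    · have hs' := cond_transfer hp e e' hH hH' hS hs
      have ht' : ¬ ∃ σ ∈ ((regularEmbedding e').range : Set (Equiv.Perm (Fin n))) ∩ T, σ ≠ 1 :=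
        fun h' => ht (cond_transfer hp e' e hH' hH hT h')
      rw [closure_inter_eq hp e hH hS hs, closure_inter_bot e ht,
        closure_inter_eq hp e' hH' hS hs', closure_inter_bot e' ht']
      exact iff_of_false (range_ne_bot e hs) (range_ne_bot e' hs')
    · have ht' := cond_transfer hp e e' hH hH' hT ht
      have hs' : ¬ ∃ σ ∈ ((regularEmbedding e').range : Set (Equiv.Perm (Fin n))) ∩ S, σ ≠ 1 :=
        fun h' => hs (cond_transfer hp e' e hH' hH hS h')
      rw [closure_inter_eq hp e hH hT ht, closure_inter_bot e hs,
        closure_inter_eq hp e' hH' hT ht', closure_inter_bot e' hs']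
      exact iff_of_false (fun h => range_ne_bot e ht h.symm) (fun h => range_ne_bot e' ht' h.symm)
    · have hs' : ¬ ∃ σ ∈ ((regularEmbedding e').range : Set (Equiv.Perm (Fin n))) ∩ S, σ ≠ 1 :=
        fun h' => hs (cond_transfer hp e' e hH' hH hS h')
      have ht' : ¬ ∃ σ ∈ ((regularEmbedding e').range : Set (Equiv.Perm (Fin n))) ∩ T, σ ≠ 1 :=
        fun h' => ht (cond_transfer hp e' e hH' hH hT h')
      rw [closure_inter_bot e hs, closure_inter_bot e ht,
        closure_inter_bot e' hs', closure_inter_bot e' ht']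
end
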